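/- The hypergraph H₁* on ℕ₊ with edges the finite sets E with |E| = min E has no strongly minimal vertex-cover: for any vertex-cover A ⊆ ℕ₊, there exists a vertex-cover A' such that |A \ A'| > |A' \ A|. -/
import Mathlib


/-- An edge of the hypergraph `H₁*`: a finite nonempty set `E` of positive
integers with `|E| = min E`. -/
def IsEdgeH1 (E : Finset ℕ) : Prop := ∃ h : E.Nonempty, E.card = E.min' h

/-- A vertex-cover of `H₁*`: a set of positive integers meeting every edge. -/
def IsVertexCoverH1 (A : Set ℕ) : Prop :=
  A ⊆ {n | 0 < n} ∧ ∀ E : Finset ℕ, IsEdgeH1 E → ∃ v ∈ E, v ∈ A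

lemma edge_pos {E : Finset ℕ} (hE : IsEdgeH1 E) {x : ℕ} (hx : x ∈ E) : 0 < x := by
  obtain ⟨h, hc⟩ := hE
  have h1 : 1 ≤ E.card := Finset.card_pos.mpr h
  have h2 := E.min'_le x hx
  omega

/-- Given `m > 0` and a set `s` of `m - 1` elements greater than `m`,
`insert m s` is an edge. -/
lemma edge_of_insert {m : ℕ} (hm : 0 < m) (s : Finset ℕ)
    (hcard : s.card = m - 1) (hgt : ∀ x ∈ s, m < x) :
    IsEdgeH1 (insert m s) := by
  have hms : m ∉ s := fun h => lt_irrefl m (hgt m h)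
  have hne : (insert m s).Nonempty := ⟨m, Finset.mem_insert_self m s⟩
  refine ⟨hne, ?_⟩
  have hmin : (insert m s).min' hne = m := by
    apply le_antisymm
    · exact Finset.min'_le _ m (Finset.mem_insert_self m s)
    · apply Finset.le_min'
      intro y hy
      rcases Finset.mem_insert.mp hy with h | h
      · omega
      · exact le_of_lt (hgt y h)
  rw [hmin, Finset.card_insert_of_notMem hms, hcard]
  omega

/-- `H₁*` has no strongly minimal vertex-cover. -/
theorem stmt_2 (A : Set ℕ) (hA : IsVertexCoverH1 A) :
    ∃ A' : Set ℕ, IsVertexCoverH1 A' ∧ (A \ A').Finite ∧ (A' \ A).Finite ∧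
      (A' \ A).ncard < (A \ A').ncard := by
  classical
  set C : Set ℕ := {n | 0 < n ∧ n ∉ A} with hCdef
  -- the complement of `A` in the positive integers is finite
  have hCfin : C.Finite := by
    by_contra hinf
    have hinf : C.Infinite := hinf
    obtain ⟨m, hm⟩ := hinf.nonempty
    have hm' : 0 < m ∧ m ∉ A := hm
    have hinf2 : (C \ Set.Iic m).Infinite := hinf.diff (Set.finite_Iic m)
    obtain ⟨t, ht, htc⟩ := hinf2.exists_subset_card_eq (m - 1)
    have hgt : ∀ x ∈ t, m < x := by
      intro x hx
      have := ht hx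
      simp only [Set.mem_diff, Set.mem_Iic] at this
      omega
    have hedge := edge_of_insert hm'.1 t htc hgt
    obtain ⟨v, hv, hvA⟩ := hA.2 _ hedge
    rcases Finset.mem_insert.mp hv with h | h
    · exact hm'.2 (h ▸ hvA)
    · have := ht h
      exact this.1.2 hvA
  by_cases hne : (hCfin.toFinset : Finset ℕ).Nonempty
  · -- complement nonempty: add its min, remove two elements beyond its max
    set a := hCfin.toFinset.min' hne with ha
    set N := hCfin.toFinset.max' hne with hN
    have haC : a ∈ C := by
      have := hCfin.toFinset.min'_mem hne
      simpa using this
    have hbound : ∀ x, 0 < x → x ∉ A → a ≤ x ∧ x ≤ N := by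
      intro x hx hxA
      have hxC : x ∈ hCfin.toFinset := by simp [hCdef]; exact ⟨hx, hxA⟩
      exact ⟨hCfin.toFinset.min'_le x hxC, hCfin.toFinset.le_max' x hxC⟩
    have haN : a ≤ N := (hbound a haC.1 haC.2).2
    have hN1A : N + 1 ∈ A := by
      by_contra h
      have := (hbound (N+1) (by omega) h).2; omega
    have hN2A : N + 2 ∈ A := by
      by_contra h
      have := (hbound (N+2) (by omega) h).2; omega
    refine ⟨(A ∪ {a}) \ {N + 1, N + 2}, ⟨?_, ?_⟩, ?_, ?_, ?_⟩
    · intro x hx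
      rcases hx.1 with h | h
      · exact hA.1 h
      · simp only [Set.mem_singleton_iff] at h
        exact h ▸ haC.1
    · -- cover property
      intro E hE
      by_contra hcon
      push_neg at hcon
      have haA' : a ∈ (A ∪ {a}) \ {N + 1, N + 2} := by
        constructor
        · right; rfl
        · simp only [Set.mem_insert_iff, Set.mem_singleton_iff]
          omega
      have haE : a ∉ E := fun h => hcon a h haA'
      have hEC : ∀ x ∈ E, x ≠ N + 1 → x ≠ N + 2 → x ∈ C := by
        intro x hx h1 h2
        have hxpos := edge_pos hE hx
        refine ⟨hxpos, fun hxA => ?_⟩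
        refine hcon x hx ⟨Or.inl hxA, ?_⟩
        simp only [Set.mem_insert_iff, Set.mem_singleton_iff]
        omega
      have hgt : ∀ x ∈ E, a < x := by
        intro x hx
        by_cases h1 : x = N + 1
        · omega
        by_cases h2 : x = N + 2
        · omega
        have hxC := hEC x hx h1 h2
        have := (hbound x hxC.1 hxC.2).1
        rcases eq_or_lt_of_le this with h | h
        · exact absurd (h ▸ hx) haE
        · exact h
      obtain ⟨hEne, hEcard⟩ := hE
      have hminE : a < E.min' hEne := hgt _ (E.min'_mem hEne)
      have hcardE : a + 1 ≤ E.card := by omega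
      have hs₀card : a - 1 ≤ (E \ ({N + 1, N + 2} : Finset ℕ)).card := by
        have h3 := Finset.card_le_card_sdiff_add_card (s := E) (t := ({N+1, N+2} : Finset ℕ))
        have h2 : ({N+1, N+2} : Finset ℕ).card ≤ 2 := by
          apply le_trans (Finset.card_insert_le _ _); simp
        omega
      obtain ⟨s, hs, hscard⟩ :=
        Finset.exists_subset_card_eq hs₀card
      have hsgt : ∀ x ∈ s, a < x := by
        intro x hx
        have hxE : x ∈ E := (Finset.mem_sdiff.mp (hs hx)).1
        exact hgt x hxE
      have hedge := edge_of_insert haC.1 s hscard hsgt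
      obtain ⟨v, hv, hvA⟩ := hA.2 _ hedge
      rcases Finset.mem_insert.mp hv with h | h
      · exact haC.2 (h ▸ hvA)
      · have hvs₀ := hs h
        rw [Finset.mem_sdiff] at hvs₀
        simp only [Finset.mem_insert, Finset.mem_singleton] at hvs₀
        have hvC := hEC v hvs₀.1 (fun h' => hvs₀.2 (Or.inl h')) (fun h' => hvs₀.2 (Or.inr h'))
        exact hvC.2 hvA
    · -- A \ A' = {N+1, N+2}
      have : A \ ((A ∪ {a}) \ {N + 1, N + 2}) = {N + 1, N + 2} := by
        ext x
        constructor
        · rintro ⟨hxA, h⟩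
          by_contra hc
          exact h ⟨Or.inl hxA, hc⟩
        · intro h
          simp only [Set.mem_insert_iff, Set.mem_singleton_iff] at h
          rcases h with rfl | rfl
          · exact ⟨hN1A, fun hmem => hmem.2 (by simp)⟩
          · exact ⟨hN2A, fun hmem => hmem.2 (by simp)⟩
      rw [this]
      exact (Set.finite_singleton _).insert _
    · have : ((A ∪ {a}) \ {N + 1, N + 2}) \ A = {a} := by
        ext x
        simp only [Set.mem_diff, Set.mem_union, Set.mem_singleton_iff,
          Set.mem_insert_iff, not_or]
        constructor
        · rintro ⟨⟨h | h, _⟩, hxA⟩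
          · exact absurd h hxA
          · exact h
        · rintro rfl
          exact ⟨⟨Or.inr rfl, by omega, by omega⟩, haC.2⟩
      rw [this]
      exact Set.finite_singleton _
    · have h1 : A \ ((A ∪ {a}) \ {N + 1, N + 2}) = {N + 1, N + 2} := by
        ext x
        constructor
        · rintro ⟨hxA, h⟩
          by_contra hc
          exact h ⟨Or.inl hxA, hc⟩
        · intro h
          simp only [Set.mem_insert_iff, Set.mem_singleton_iff] at h
          rcases h with rfl | rfl
          · exact ⟨hN1A, fun hmem => hmem.2 (by simp)⟩
          · exact ⟨hN2A, fun hmem => hmem.2 (by simp)⟩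
      have h2 : ((A ∪ {a}) \ {N + 1, N + 2}) \ A = {a} := by
        ext x
        simp only [Set.mem_diff, Set.mem_union, Set.mem_singleton_iff,
          Set.mem_insert_iff, not_or]
        constructor
        · rintro ⟨⟨h | h, _⟩, hxA⟩
          · exact absurd h hxA
          · exact h
        · rintro rfl
          exact ⟨⟨Or.inr rfl, by omega, by omega⟩, haC.2⟩
      rw [h1, h2, Set.ncard_singleton]
      rw [Set.ncard_pair (by omega : N + 1 ≠ N + 2)]
      omega
  · -- complement empty: A contains all positive integers; remove 3
    have hall : ∀ n, 0 < n → n ∈ A := by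
      intro n hn
      by_contra h
      have : n ∈ hCfin.toFinset := by simp [hCdef]; exact ⟨hn, h⟩
      exact hne ⟨n, this⟩
    refine ⟨A \ {3}, ⟨?_, ?_⟩, ?_, ?_, ?_⟩
    · exact fun x hx => hA.1 hx.1
    · intro E hE
      obtain ⟨hEne, hEcard⟩ := hE
      set m := E.min' hEne with hm
      have hmE := E.min'_mem hEne
      have hmpos : 0 < m := edge_pos ⟨hEne, hEcard⟩ hmE
      by_cases h3 : m = 3
      · -- card E = 3, so there is an element ≠ 3
        have : ∃ x ∈ E, x ≠ 3 := by
          by_contra hc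
          push_neg at hc
          have : E ⊆ {3} := fun x hx => Finset.mem_singleton.mpr (hc x hx)
          have := Finset.card_le_card this
          simp at this
          omega
        obtain ⟨x, hxE, hx3⟩ := this
        exact ⟨x, hxE, hall x (edge_pos ⟨hEne, hEcard⟩ hxE), hx3⟩
      · exact ⟨m, hmE, hall m hmpos, h3⟩
    · have : A \ (A \ {3}) = {3} := by
        ext x
        simp only [Set.mem_diff, Set.mem_singleton_iff, not_and, not_not]
        constructor
        · rintro ⟨hxA, h⟩; exact h hxA
        · rintro rfl; exact ⟨hall 3 (by omega), fun _ => rfl⟩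
      rw [this]; exact Set.finite_singleton _
    · have : (A \ {3}) \ A = ∅ := by
        ext x; simp only [Set.mem_diff, Set.mem_empty_iff_false, iff_false]
        rintro ⟨⟨h, _⟩, h'⟩; exact h' h
      rw [this]; exact Set.finite_empty
    · have h1 : A \ (A \ {3}) = {3} := by
        ext x
        simp only [Set.mem_diff, Set.mem_singleton_iff, not_and, not_not]
        constructor
        · rintro ⟨hxA, h⟩; exact h hxA
        · rintro rfl; exact ⟨hall 3 (by omega), fun _ => rfl⟩
      have h2 : (A \ {3}) \ A = ∅ := by
        ext x; simp only [Set.mem_diff, Set.mem_empty_iff_false, iff_false]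
        rintro ⟨⟨h, _⟩, h'⟩; exact h' h
      rw [h1, h2, Set.ncard_singleton, Set.ncard_empty]
      omega
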